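/- Intermediate formula from the proof of Lemma 2.2 (half dual edge). Let p_i, p_j, p_k be unit vectors in ℝ³ with det(p_i,p_j,p_k) > 0, set λ_ij := arccos⟨p_i,p_j⟩, let n ∈ ℝ³ be the unique vector with ⟨n,p_i⟩ = ⟨n,p_j⟩ = ⟨n,p_k⟩ = 1, and let n_{ij} := (p_i + p_j)/(1 + ⟨p_i,p_j⟩) (the unique vector in the span of p_i and p_j whose inner product with each of p_i, p_j equals 1). Then n − n_{ij} = [ tan( (α(p_i;p_j,p_k) + α(p_j;p_k,p_i) − α(p_k;p_i,p_j))/2 ) / ( 2·cos²(λ_ij/2) ) ]·(p_i × p_j). -/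

import Mathlib

noncomputable section
set_option maxHeartbeats 1000000

/-- Standard inner product on `ℝ³`. -/
def dot3 (x y : Fin 3 → ℝ) : ℝ := x 0 * y 0 + x 1 * y 1 + x 2 * y 2

/-- Euclidean norm on `ℝ³`. -/
def norm3 (x : Fin 3 → ℝ) : ℝ := Real.sqrt (dot3 x x)

/-- Cross product on `ℝ³`. -/
def cross3 (x y : Fin 3 → ℝ) : Fin 3 → ℝ :=
  ![x 1 * y 2 - x 2 * y 1, x 2 * y 0 - x 0 * y 2, x 0 * y 1 - x 1 * y 0]

/-- Determinant of three vectors in `ℝ³`. -/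
def det3 (x y z : Fin 3 → ℝ) : ℝ := dot3 (cross3 x y) z

/-- Spherical angle at `a` between `b` and `c` (all unit vectors). -/
def sphAngle (a b c : Fin 3 → ℝ) : ℝ :=
  Real.arccos (dot3 (b - dot3 a b • a) (c - dot3 a c • a) /
    (norm3 (b - dot3 a b • a) * norm3 (c - dot3 a c • a)))

lemma dot3_comm (x y : Fin 3 → ℝ) : dot3 x y = dot3 y x := by unfold dot3; ring

lemma dot3_self_nonneg (x : Fin 3 → ℝ) : 0 ≤ dot3 x x := by
  unfold dot3; nlinarith [sq_nonneg (x 0), sq_nonneg (x 1), sq_nonneg (x 2)]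

lemma dot3_cross_cross (x y z w : Fin 3 → ℝ) :
    dot3 (cross3 x y) (cross3 z w) = dot3 x z * dot3 y w - dot3 x w * dot3 y z := by
  simp [dot3, cross3]; ring

lemma dot3_cross_left (x y : Fin 3 → ℝ) : dot3 (cross3 x y) x = 0 := by
  simp [dot3, cross3]; ring

lemma dot3_cross_right (x y : Fin 3 → ℝ) : dot3 (cross3 x y) y = 0 := by
  simp [dot3, cross3]; ring

lemma dot3_cross_left' (x y : Fin 3 → ℝ) : dot3 x (cross3 x y) = 0 := by
  simp [dot3, cross3]; ring

lemma dot3_cross_right' (x y : Fin 3 → ℝ) : dot3 y (cross3 x y) = 0 := by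
  simp [dot3, cross3]; ring

lemma det3_sq (x y z : Fin 3 → ℝ) :
    det3 x y z ^ 2 = dot3 x x * dot3 y y * dot3 z z + 2 * dot3 x y * dot3 y z * dot3 z x
      - dot3 x x * dot3 y z ^ 2 - dot3 y y * dot3 z x ^ 2 - dot3 z z * dot3 x y ^ 2 := by
  simp [det3, dot3, cross3]; ring

lemma expand3 (x y z v : Fin 3 → ℝ) :
    det3 x y z • v = dot3 v x • cross3 y z + dot3 v y • cross3 z x + dot3 v z • cross3 x y := by
  funext i
  fin_cases i <;>
    simp [det3, dot3, cross3, Pi.smul_apply, smul_eq_mul] <;> ring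

lemma dot3_sub_smul (x y z w : Fin 3 → ℝ) (r s : ℝ) :
    dot3 (x - r • y) (z - s • w)
      = dot3 x z - s * dot3 x w - r * dot3 y z + r * s * dot3 y w := by
  simp [dot3, Pi.sub_apply, Pi.smul_apply, smul_eq_mul]; ring

lemma dot3_expand (x y z w : Fin 3 → ℝ) (r s : ℝ) :
    dot3 (x - r • y - s • z) w = dot3 x w - r * dot3 y w - s * dot3 z w := by
  simp [dot3, Pi.sub_apply, Pi.smul_apply, smul_eq_mul]; ring

lemma dot3_add_left (x y z : Fin 3 → ℝ) : dot3 (x + y) z = dot3 x z + dot3 y z := by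
  simp [dot3, Pi.add_apply]; ring

lemma dot3_smul_left (r : ℝ) (x y : Fin 3 → ℝ) : dot3 (r • x) y = r * dot3 x y := by
  simp [dot3, Pi.smul_apply, smul_eq_mul]; ring

lemma dot3_eq_one {x : Fin 3 → ℝ} (h : norm3 x = 1) : dot3 x x = 1 := by
  have h2 := congrArg (· ^ 2) h
  simpa [norm3, Real.sq_sqrt (dot3_self_nonneg x)] using h2

lemma tan_half_eq (x : ℝ) (h : 0 < 1 + Real.cos x) :
    Real.tan (x / 2) = Real.sin x / (1 + Real.cos x) := by
  have hcc : 1 + Real.cos x = 2 * Real.cos (x / 2) ^ 2 := by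
    have h2 := Real.cos_sq (x / 2)
    rw [show 2 * (x / 2) = x by ring] at h2
    rw [h2]; ring
  have hc : Real.cos (x / 2) ≠ 0 := by
    intro h0; rw [hcc, h0] at h; norm_num at h
  have hs : Real.sin x = 2 * Real.sin (x / 2) * Real.cos (x / 2) := by
    rw [show x = 2 * (x / 2) by ring, Real.sin_two_mul]; ring_nf
  rw [Real.tan_eq_sin_div_cos, hs, hcc]
  field_simp

lemma tan_key (a b c D : ℝ) (ha : a ^ 2 < 1) (hb : b ^ 2 < 1) (hc : c ^ 2 < 1)
    (hD : 0 < D) (hD2 : D ^ 2 = 1 - a ^ 2 - b ^ 2 - c ^ 2 + 2 * (a * b * c)) :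
    Real.tan ((Real.arccos ((a - b * c) / (Real.sqrt (1 - c ^ 2) * Real.sqrt (1 - b ^ 2)))
        + Real.arccos ((b - c * a) / (Real.sqrt (1 - a ^ 2) * Real.sqrt (1 - c ^ 2)))
        - Real.arccos ((c - a * b) / (Real.sqrt (1 - b ^ 2) * Real.sqrt (1 - a ^ 2)))) / 2)
      = (1 + c - a - b) / D := by
  have ha1 : (0:ℝ) < 1 - a ^ 2 := by linarith
  have hb1 : (0:ℝ) < 1 - b ^ 2 := by linarith
  have hc1 : (0:ℝ) < 1 - c ^ 2 := by linarith
  set sa := Real.sqrt (1 - a ^ 2) with hsa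
  set sb := Real.sqrt (1 - b ^ 2) with hsb
  set sc := Real.sqrt (1 - c ^ 2) with hsc
  have hsa2 : sa ^ 2 = 1 - a ^ 2 := Real.sq_sqrt ha1.le
  have hsb2 : sb ^ 2 = 1 - b ^ 2 := Real.sq_sqrt hb1.le
  have hsc2 : sc ^ 2 = 1 - c ^ 2 := Real.sq_sqrt hc1.le
  have hsa0 : 0 < sa := Real.sqrt_pos.mpr ha1
  have hsb0 : 0 < sb := Real.sqrt_pos.mpr hb1
  have hsc0 : 0 < sc := Real.sqrt_pos.mpr hc1
  set α := Real.arccos ((a - b * c) / (sc * sb)) with hαdef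
  set β := Real.arccos ((b - c * a) / (sa * sc)) with hβdef
  set γ := Real.arccos ((c - a * b) / (sb * sa)) with hγdef
  have key : ∀ t u v : ℝ, 0 < u → 0 < v → (t / (u * v)) ^ 2 ≤ 1 →
      Real.cos (Real.arccos (t / (u * v))) = t / (u * v) := by
    intro t u v hu hv hsq
    have hb := abs_le.mp ((sq_le_one_iff_abs_le_one (t / (u * v))).mp hsq)
    exact Real.cos_arccos hb.1 hb.2
  have hsqα : ((a - b * c) / (sc * sb)) ^ 2 ≤ 1 := by
    rw [div_pow, div_le_one (by positivity)]
    have hkey : (sc * sb) ^ 2 - (a - b * c) ^ 2 = D ^ 2 := by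
      linear_combination sb ^ 2 * hsc2 + (1 - c ^ 2) * hsb2 - hD2
    linarith [hkey, sq_nonneg D]
  have hsqβ : ((b - c * a) / (sa * sc)) ^ 2 ≤ 1 := by
    rw [div_pow, div_le_one (by positivity)]
    have hkey : (sa * sc) ^ 2 - (b - c * a) ^ 2 = D ^ 2 := by
      linear_combination sc ^ 2 * hsa2 + (1 - a ^ 2) * hsc2 - hD2
    linarith [hkey, sq_nonneg D]
  have hsqγ : ((c - a * b) / (sb * sa)) ^ 2 ≤ 1 := by
    rw [div_pow, div_le_one (by positivity)]
    have hkey : (sb * sa) ^ 2 - (c - a * b) ^ 2 = D ^ 2 := by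
      linear_combination sa ^ 2 * hsb2 + (1 - b ^ 2) * hsa2 - hD2
    linarith [hkey, sq_nonneg D]
  have hcosα : Real.cos α = (a - b * c) / (sc * sb) := key _ _ _ hsc0 hsb0 hsqα
  have hcosβ : Real.cos β = (b - c * a) / (sa * sc) := key _ _ _ hsa0 hsc0 hsqβ
  have hcosγ : Real.cos γ = (c - a * b) / (sb * sa) := key _ _ _ hsb0 hsa0 hsqγ
  have hsinα : Real.sin α = D / (sc * sb) := by
    rw [hαdef, Real.sin_arccos,
      show 1 - ((a - b * c) / (sc * sb)) ^ 2 = (D / (sc * sb)) ^ 2 by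
        field_simp
        linear_combination -hD2 + (1 - b^2) * hsc2 + sc^2 * hsb2,
      Real.sqrt_sq (by positivity)]
  have hsinβ : Real.sin β = D / (sa * sc) := by
    rw [hβdef, Real.sin_arccos,
      show 1 - ((b - c * a) / (sa * sc)) ^ 2 = (D / (sa * sc)) ^ 2 by
        field_simp
        linear_combination -hD2 + (1 - c^2) * hsa2 + sa^2 * hsc2,
      Real.sqrt_sq (by positivity)]
  have hsinγ : Real.sin γ = D / (sb * sa) := by
    rw [hγdef, Real.sin_arccos,
      show 1 - ((c - a * b) / (sb * sa)) ^ 2 = (D / (sb * sa)) ^ 2 by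
        field_simp
        linear_combination -hD2 + (1 - a^2) * hsb2 + sb^2 * hsa2,
      Real.sqrt_sq (by positivity)]
  have hsinab : Real.sin (α + β) = D * (a + b) * (1 - c) / (sa * sb * sc ^ 2) := by
    rw [Real.sin_add, hsinα, hcosβ, hcosα, hsinβ]
    field_simp; ring
  have hcosab : Real.cos (α + β)
      = ((a - b * c) * (b - c * a) - D ^ 2) / (sa * sb * sc ^ 2) := by
    rw [Real.cos_add, hcosα, hcosβ, hsinα, hsinβ]
    field_simp
  have hsinx : Real.sin (α + β - γ)
      = D * (1 + c - a - b) * ((1 - c) * (1 + a) * (1 + b))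
        / (sa ^ 2 * sb ^ 2 * sc ^ 2) := by
    rw [Real.sin_sub, hsinab, hcosab, hcosγ, hsinγ]
    rw [show D * (1 + c - a - b) * ((1 - c) * (1 + a) * (1 + b))
        = D * ((a + b) * (1 - c) * (c - a * b) - ((a - b * c) * (b - c * a) - D ^ 2)) by
      linear_combination (-D) * hD2]
    field_simp
  have hcos0 : Real.cos (α + β - γ)
      = (((a - b * c) * (b - c * a) - D ^ 2) * (c - a * b) + D ^ 2 * ((a + b) * (1 - c)))
        / (sa ^ 2 * sb ^ 2 * sc ^ 2) := by
    rw [Real.cos_sub, hsinab, hcosab, hcosγ, hsinγ]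
    field_simp
  have hcosx : 1 + Real.cos (α + β - γ)
      = D ^ 2 * ((1 - c) * (1 + a) * (1 + b)) / (sa ^ 2 * sb ^ 2 * sc ^ 2) := by
    rw [hcos0, hsa2, hsb2, hsc2]
    field_simp
    linear_combination ((1 - c) * (1 + a) * (1 + b) - (a + b) * (1 - c) + (c - a * b)
      + (2 * (a * b * c) - 2)) * hD2
  have hW : (0:ℝ) < (1 - c) * (1 + a) * (1 + b) := by
    have h1 : -1 < a := (abs_lt.mp ((sq_lt_one_iff_abs_lt_one a).mp ha)).1
    have h2 : -1 < b := (abs_lt.mp ((sq_lt_one_iff_abs_lt_one b).mp hb)).1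
    have h3 : c < 1 := (abs_lt.mp ((sq_lt_one_iff_abs_lt_one c).mp hc)).2
    have : (0:ℝ) < 1 - c := by linarith
    have : (0:ℝ) < 1 + a := by linarith
    have : (0:ℝ) < 1 + b := by linarith
    positivity
  have hpos : 0 < 1 + Real.cos (α + β - γ) := by
    rw [hcosx]
    exact div_pos (mul_pos (pow_pos hD 2) hW)
      (mul_pos (mul_pos (pow_pos hsa0 2) (pow_pos hsb0 2)) (pow_pos hsc0 2))
  rw [tan_half_eq _ hpos, hsinx, hcosx]
  have hP : (sa ^ 2 * sb ^ 2 * sc ^ 2) ≠ 0 :=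
    ne_of_gt (mul_pos (mul_pos (pow_pos hsa0 2) (pow_pos hsb0 2)) (pow_pos hsc0 2))
  have hW' : ((1 - c) * (1 + a) * (1 + b)) ≠ 0 := ne_of_gt hW
  have hD' : D ≠ 0 := ne_of_gt hD
  rw [div_div_div_cancel_right₀ hP, div_eq_div_iff (mul_ne_zero (pow_ne_zero 2 hD') hW') hD']
  ring

/-- Intermediate formula from the proof of Lemma 2.2 (half dual edge): the vector from
`n_{ij}` (foot on the line `p_i^* ∩ p_j^*`) to the dual vertex `n` of the triangle
`p_i p_j p_k` is an explicit multiple of `p_i × p_j`. -/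
theorem sph_half_dual_edge_formula
    (pi pj pk : Fin 3 → ℝ)
    (hpi : norm3 pi = 1) (hpj : norm3 pj = 1) (hpk : norm3 pk = 1)
    (hdet : 0 < det3 pi pj pk)
    (n : Fin 3 → ℝ)
    (hni : dot3 n pi = 1) (hnj : dot3 n pj = 1) (hnk : dot3 n pk = 1) :
    n - (1 + dot3 pi pj)⁻¹ • (pi + pj)
      = (Real.tan ((sphAngle pi pj pk + sphAngle pj pk pi - sphAngle pk pi pj) / 2)
          / (2 * Real.cos (Real.arccos (dot3 pi pj) / 2) ^ 2)) • cross3 pi pj := by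
  have upi : dot3 pi pi = 1 := dot3_eq_one hpi
  have upj : dot3 pj pj = 1 := dot3_eq_one hpj
  have upk : dot3 pk pk = 1 := dot3_eq_one hpk
  set a := dot3 pj pk with hadef
  set b := dot3 pk pi with hbdef
  set c := dot3 pi pj with hcdef
  set D := det3 pi pj pk with hDdef
  have hcpk : dot3 pk pj = a := dot3_comm pk pj
  have hcpi : dot3 pi pk = b := dot3_comm pi pk
  have hcpj : dot3 pj pi = c := dot3_comm pj pi
  have hD2 : D ^ 2 = 1 - a ^ 2 - b ^ 2 - c ^ 2 + 2 * (a * b * c) := by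
    rw [hDdef, det3_sq, upi, upj, upk, hbdef, hadef, hcdef]; ring
  -- Lagrange nonnegativity
  have hA0 : 0 ≤ 1 - a ^ 2 := by
    have h := dot3_self_nonneg (cross3 pj pk)
    rw [dot3_cross_cross, upj, upk, hcpk, ← hadef] at h
    linarith [h, pow_two a]
  have hB0 : 0 ≤ 1 - b ^ 2 := by
    have h := dot3_self_nonneg (cross3 pk pi)
    rw [dot3_cross_cross, upk, upi, hcpi, ← hbdef] at h
    linarith [h, pow_two b]
  have hC0 : 0 ≤ 1 - c ^ 2 := by
    have h := dot3_self_nonneg (cross3 pi pj)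
    rw [dot3_cross_cross, upi, upj, hcpj, ← hcdef] at h
    linarith [h, pow_two c]
  have hDsq : 0 < D ^ 2 := pow_pos hdet 2
  have ha : a ^ 2 < 1 := by
    have key : (1 - a ^ 2) * (1 - c ^ 2) = D ^ 2 + (b - a * c) ^ 2 := by
      linear_combination -hD2
    have hpos : 0 < (1 - a ^ 2) * (1 - c ^ 2) := by
      have := sq_nonneg (b - a * c); linarith [key]
    by_contra hcon
    push_neg at hcon
    have hle : (1 - a ^ 2) ≤ 0 := by linarith
    have := mul_nonpos_of_nonpos_of_nonneg hle hC0
    linarith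
  have hb : b ^ 2 < 1 := by
    have key : (1 - b ^ 2) * (1 - c ^ 2) = D ^ 2 + (a - b * c) ^ 2 := by
      linear_combination -hD2
    have hpos : 0 < (1 - b ^ 2) * (1 - c ^ 2) := by
      have := sq_nonneg (a - b * c); linarith [key]
    by_contra hcon
    push_neg at hcon
    have hle : (1 - b ^ 2) ≤ 0 := by linarith
    have := mul_nonpos_of_nonpos_of_nonneg hle hC0
    linarith
  have hc : c ^ 2 < 1 := by
    have key : (1 - c ^ 2) * (1 - a ^ 2) = D ^ 2 + (b - c * a) ^ 2 := by
      linear_combination -hD2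
    have hpos : 0 < (1 - c ^ 2) * (1 - a ^ 2) := by
      have := sq_nonneg (b - c * a); linarith [key]
    by_contra hcon
    push_neg at hcon
    have hle : (1 - c ^ 2) ≤ 0 := by linarith
    have := mul_nonpos_of_nonpos_of_nonneg hle hA0
    linarith
  have hcabs := abs_lt.mp ((sq_lt_one_iff_abs_lt_one c).mp hc)
  have h1c : (0:ℝ) < 1 + c := by linarith [hcabs.1]
  have h1c' : (1 + c : ℝ) ≠ 0 := ne_of_gt h1c
  have hD' : D ≠ 0 := ne_of_gt hdet
  -- rewrite the three spherical angles
  have d1 : dot3 (pj - dot3 pi pj • pi) (pk - dot3 pi pk • pi) = a - b * c := by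
    rw [dot3_sub_smul, upi, hcpi, hcpj, ← hadef, ← hcdef]; ring
  have d2 : dot3 (pj - dot3 pi pj • pi) (pj - dot3 pi pj • pi) = 1 - c ^ 2 := by
    rw [dot3_sub_smul, upi, upj, hcpj, ← hcdef]; ring
  have d3 : dot3 (pk - dot3 pi pk • pi) (pk - dot3 pi pk • pi) = 1 - b ^ 2 := by
    rw [dot3_sub_smul, upi, upk, hcpi, ← hbdef]; ring
  have e1 : sphAngle pi pj pk
      = Real.arccos ((a - b * c) / (Real.sqrt (1 - c ^ 2) * Real.sqrt (1 - b ^ 2))) := by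
    unfold sphAngle norm3
    rw [d1, d2, d3]
  have d4 : dot3 (pk - dot3 pj pk • pj) (pi - dot3 pj pi • pj) = b - c * a := by
    rw [dot3_sub_smul, upj, hcpj, hcpk, ← hadef, ← hbdef]; ring
  have d5 : dot3 (pk - dot3 pj pk • pj) (pk - dot3 pj pk • pj) = 1 - a ^ 2 := by
    rw [dot3_sub_smul, upj, upk, hcpk, ← hadef]; ring
  have d6 : dot3 (pi - dot3 pj pi • pj) (pi - dot3 pj pi • pj) = 1 - c ^ 2 := by
    rw [dot3_sub_smul, upj, upi, hcpj, ← hcdef]; ring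
  have e2 : sphAngle pj pk pi
      = Real.arccos ((b - c * a) / (Real.sqrt (1 - a ^ 2) * Real.sqrt (1 - c ^ 2))) := by
    unfold sphAngle norm3
    rw [d4, d5, d6]
  have d7 : dot3 (pi - dot3 pk pi • pk) (pj - dot3 pk pj • pk) = c - a * b := by
    rw [dot3_sub_smul, upk, hcpi, hcpk, ← hbdef, ← hcdef]; ring
  have d8 : dot3 (pi - dot3 pk pi • pk) (pi - dot3 pk pi • pk) = 1 - b ^ 2 := by
    rw [dot3_sub_smul, upk, upi, hcpi, ← hbdef]; ring
  have d9 : dot3 (pj - dot3 pk pj • pk) (pj - dot3 pk pj • pk) = 1 - a ^ 2 := by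
    rw [dot3_sub_smul, upk, upj, hcpk, ← hadef]; ring
  have e3 : sphAngle pk pi pj
      = Real.arccos ((c - a * b) / (Real.sqrt (1 - b ^ 2) * Real.sqrt (1 - a ^ 2))) := by
    unfold sphAngle norm3
    rw [d7, d8, d9]
  have hT : Real.tan ((sphAngle pi pj pk + sphAngle pj pk pi - sphAngle pk pi pj) / 2)
      = (1 + c - a - b) / D := by
    rw [e1, e2, e3]; exact tan_key a b c D ha hb hc hdet hD2
  have h2cos : 2 * Real.cos (Real.arccos c / 2) ^ 2 = 1 + c := by
    rw [Real.cos_sq, show 2 * (Real.arccos c / 2) = Real.arccos c by ring,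
      Real.cos_arccos (by linarith [hcabs.1]) (by linarith [hcabs.2])]
    ring
  rw [hT, h2cos, ← sub_eq_zero]
  -- dual vertex formula
  have hn : D • n = cross3 pj pk + cross3 pk pi + cross3 pi pj := by
    have h := expand3 pi pj pk n
    rw [hni, hnj, hnk, one_smul, one_smul, one_smul, ← hDdef] at h
    exact h
  have hncross : dot3 n (cross3 pi pj) = (c * a - b + (b * c - a) + (1 - c ^ 2)) / D := by
    have h := congrArg (fun w => dot3 w (cross3 pi pj)) hn
    simp only [dot3_smul_left, dot3_add_left] at h
    rw [dot3_cross_cross, dot3_cross_cross, dot3_cross_cross, upi, upj, hcpj, hcpk,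
      ← hbdef, ← hcdef] at h
    rw [eq_div_iff (ne_of_gt hdet)]
    linear_combination h
  have hvi : dot3 (n - (1 + c)⁻¹ • (pi + pj)
      - ((1 + c - a - b) / D / (1 + c)) • cross3 pi pj) pi = 0 := by
    rw [dot3_expand, hni, dot3_add_left, upi, hcpj, dot3_cross_left]
    field_simp
    ring
  have hvj : dot3 (n - (1 + c)⁻¹ • (pi + pj)
      - ((1 + c - a - b) / D / (1 + c)) • cross3 pi pj) pj = 0 := by
    rw [dot3_expand, hnj, dot3_add_left, upj, ← hcdef, dot3_cross_right]
    field_simp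
    ring
  have hvc : dot3 (n - (1 + c)⁻¹ • (pi + pj)
      - ((1 + c - a - b) / D / (1 + c)) • cross3 pi pj) (cross3 pi pj) = 0 := by
    rw [dot3_expand, hncross, dot3_add_left, dot3_cross_left', dot3_cross_right',
      dot3_cross_cross, upi, upj, hcpj, ← hcdef]
    field_simp
    ring
  have h0 : det3 pi pj (cross3 pi pj) • (n - (1 + c)⁻¹ • (pi + pj)
      - ((1 + c - a - b) / D / (1 + c)) • cross3 pi pj) = 0 := by
    rw [expand3, hvi, hvj, hvc]
    simp
  have hd3 : det3 pi pj (cross3 pi pj) = 1 - c ^ 2 := by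
    show dot3 (cross3 pi pj) (cross3 pi pj) = 1 - c ^ 2
    rw [dot3_cross_cross, upi, upj, hcpj, ← hcdef]; ring
  rw [hd3] at h0
  have hne : (1 - c ^ 2 : ℝ) ≠ 0 := ne_of_gt (by linarith [hc])
  exact (smul_eq_zero.mp h0).resolve_left hne
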